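/- Let X be a finite connected quandle, x, y ∈ X, and let m_{x,y} be the minimal positive integer n with x◁^n y = x. Then m_{x,y} divides |Inn(X)|/|X|, the order of the stabilizer of x in Inn(X). -/

import Mathlib

/-- A quandle in the convention of the paper. -/
class PQuandle (X : Type*) where
  op : X → X → X
  op_self : ∀ a : X, op a a = a
  op_bij : ∀ a : X, Function.Bijective (fun x => op x a)
  op_distrib : ∀ a b c : X, op (op a b) c = op (op a c) (op b c)

infixl:65 " ◁ " => PQuandle.op

namespace PQuandle

variable {X : Type*} [PQuandle X]

/-- The `n`-fold right operation `x ◁ⁿ y`. -/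
def opn (x : X) (n : ℕ) (y : X) : X := (fun z => z ◁ y)^[n] x

/-- The right translation `(· ◁ y)` as a permutation of `X`. -/
noncomputable def act (y : X) : Equiv.Perm X := Equiv.ofBijective _ (op_bij y)

@[simp] lemma act_apply (y x : X) : act y x = x ◁ y := rfl

/-- The inner automorphism group `Inn(X)`. -/
noncomputable def Inn (X : Type*) [PQuandle X] : Subgroup (Equiv.Perm X) :=
  Subgroup.closure (Set.range (act (X := X)))

/-- The relators `e_{x ◁ y}⁻¹ e_y⁻¹ e_x e_y` of the adjoint group. -/
def adjRels (X : Type*) [PQuandle X] : Set (FreeGroup X) :=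
  { r | ∃ x y : X,
      r = (FreeGroup.of (x ◁ y))⁻¹ * (FreeGroup.of y)⁻¹ * FreeGroup.of x * FreeGroup.of y }

/-- The adjoint (enveloping) group `As(X)` of the quandle `X`. -/
def Adj (X : Type*) [PQuandle X] : Type _ := PresentedGroup (adjRels X)

instance : Group (Adj X) := by unfold Adj; infer_instance

/-- The generator `e_x` of `As(X)`. -/
def gen (x : X) : Adj X := PresentedGroup.of x

lemma gen_rel (x y : X) : gen (x ◁ y) = (gen y)⁻¹ * gen x * gen y := by
  have h : ((FreeGroup.of (x ◁ y))⁻¹ * (FreeGroup.of y)⁻¹ * FreeGroup.of x * FreeGroup.of y :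
      FreeGroup X) ∈ Subgroup.normalClosure (adjRels X) :=
    Subgroup.subset_normalClosure ⟨x, y, rfl⟩
  have h2 : ((gen (x ◁ y))⁻¹ * (gen y)⁻¹ * gen x * gen y : Adj X) = 1 := by
    have := (QuotientGroup.eq_one_iff
      (((FreeGroup.of (x ◁ y))⁻¹ * (FreeGroup.of y)⁻¹ * FreeGroup.of x * FreeGroup.of y :
        FreeGroup X))).mpr h
    exact this
  calc gen (x ◁ y)
      = gen (x ◁ y) * ((gen (x ◁ y))⁻¹ * (gen y)⁻¹ * gen x * gen y) := by rw [h2, mul_one]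
    _ = (gen y)⁻¹ * gen x * gen y := by group

lemma act_mul_act (x y : X) : act y * act x = act (x ◁ y) * act y := by
  ext z
  simp only [Equiv.Perm.mul_apply, act_apply]
  exact op_distrib z x y

/-- The homomorphism `As(X) → Perm(X)` sending `e_y` to the inverse of the right
translation by `y`; it encodes the right action of `As(X)` on `X`. -/
noncomputable def innHom : Adj X →* Equiv.Perm X :=
  PresentedGroup.toGroup (f := fun y : X => (act y)⁻¹) (by
    rintro r ⟨x, y, rfl⟩
    simp only [map_mul, map_inv, FreeGroup.lift_apply_of, inv_inv]
    have := act_mul_act x y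
    calc act (x ◁ y) * act y * (act x)⁻¹ * (act y)⁻¹
        = (act y * act x) * (act x)⁻¹ * (act y)⁻¹ := by rw [this]
      _ = 1 := by group)

@[simp] lemma innHom_gen (y : X) : innHom (gen y) = (act y)⁻¹ :=
  PresentedGroup.toGroup.of _

/-- The right action of `As(X)` on `X`: `x · g`. -/
noncomputable def ract (x : X) (g : Adj X) : X := (innHom g)⁻¹ x

@[simp] lemma ract_gen (x y : X) : ract x (gen y) = x ◁ y := by
  simp [ract]

lemma ract_mul (x : X) (g h : Adj X) : ract x (g * h) = ract (ract x g) h := by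
  simp [ract, map_mul]

/-- A quandle is connected if the right action of `As(X)` on `X` is transitive. -/
def Connected (X : Type*) [PQuandle X] : Prop :=
  ∀ x y : X, ∃ g : Adj X, ract x g = y

/-- The homomorphism `ε : As(X) → ℤ` sending every generator `e_x` to `1`. -/
def eps : Adj X →* Multiplicative ℤ :=
  PresentedGroup.toGroup (f := fun _ : X => Multiplicative.ofAdd 1) (by
    rintro r ⟨x, y, rfl⟩
    simp only [map_mul, map_inv, FreeGroup.lift_apply_of]
    group)

@[simp] lemma eps_gen (x : X) : eps (gen x) = Multiplicative.ofAdd 1 :=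
  PresentedGroup.toGroup.of _

/-- The underlying set of the universal covering quandle: `Ker ε`. -/
def covOp (a : X) (g h : (eps (X := X)).ker) : (eps (X := X)).ker :=
  ⟨(gen a)⁻¹ * g.1 * (h.1)⁻¹ * gen a * h.1, by
    have hg : eps g.1 = 1 := g.2
    have hh : eps h.1 = 1 := h.2
    simp only [MonoidHom.mem_ker, map_mul, map_inv, hg, hh]
    group⟩

/-- `n`-fold covering operation. -/
def covOpn (a : X) (g : (eps (X := X)).ker) (n : ℕ) (h : (eps (X := X)).ker) :
    (eps (X := X)).ker := (fun u => covOp a u h)^[n] g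

/-- The right translation of the covering quandle as a permutation. -/
def covAct (a : X) (h : (eps (X := X)).ker) : Equiv.Perm (eps (X := X)).ker where
  toFun g := covOp a g h
  invFun g := ⟨gen a * g.1 * (h.1)⁻¹ * (gen a)⁻¹ * h.1, by
    have hg : eps g.1 = 1 := g.2
    have hh : eps h.1 = 1 := h.2
    simp only [MonoidHom.mem_ker, map_mul, map_inv, hg, hh]
    group⟩
  left_inv g := by
    apply Subtype.ext
    simp only [covOp]
    group
  right_inv g := by
    apply Subtype.ext
    simp only [covOp]
    group

end PQuandle

namespace PQuandle

variable {X : Type*} [PQuandle X]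

lemma inn_map_op {f : Equiv.Perm X} (hf : f ∈ Inn X) :
    ∀ a b : X, f (a ◁ b) = f a ◁ f b := by
  induction hf using Subgroup.closure_induction with
  | mem g hg =>
      obtain ⟨z, rfl⟩ := hg
      exact fun a b => op_distrib a b z
  | one => intro a b; rfl
  | mul g h _ _ ihg ihh =>
      intro a b
      simp only [Equiv.Perm.mul_apply, ihh a b, ihg]
  | inv g _ ih =>
      intro a b
      apply g.injective
      rw [ih, Equiv.Perm.coe_inv, Equiv.apply_symm_apply, Equiv.apply_symm_apply, Equiv.apply_symm_apply]

lemma inn_conj_act {f : Equiv.Perm X} (hf : f ∈ Inn X) (z : X) :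
    f * act z * f⁻¹ = act (f z) := by
  ext w
  simp only [Equiv.Perm.mul_apply, act_apply]
  rw [inn_map_op hf, Equiv.Perm.coe_inv, Equiv.apply_symm_apply]

end PQuandle


open PQuandle in
/-- In a finite connected quandle, the minimal `n > 0` with `x ◁ⁿ y = x` divides
`|Inn(X)|/|X|`, the order of the stabilizer of `x` in `Inn(X)`. -/
theorem stmt19 (X : Type*) [PQuandle X] [Finite X]
    (hconn : ∀ x y : X, ∃ f ∈ Inn X, f x = y) (x y : X) (m : ℕ)
    (hm : IsLeast {n : ℕ | 0 < n ∧ opn x n y = x} m) :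
    m ∣ Nat.card (Inn X) / Nat.card X := by
  obtain ⟨f, hf, hfx⟩ := hconn y x
  have hmem : ∀ z : X, act z ∈ Inn X := fun z => Subgroup.subset_closure ⟨z, rfl⟩
  have hper : Function.IsPeriodicPt (fun z => z ◁ y) m x := hm.1.2
  have hmp : m = Function.minimalPeriod (fun z => z ◁ y) x := by
    have h1 := Function.IsPeriodicPt.minimalPeriod_dvd hper
    have h2 : Function.minimalPeriod (fun z => z ◁ y) x ∈ {n : ℕ | 0 < n ∧ opn x n y = x} := by
      refine ⟨?_, Function.iterate_minimalPeriod⟩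
      exact Function.IsPeriodicPt.minimalPeriod_pos hm.1.1 hper
    exact le_antisymm (hm.2 h2) (Nat.le_of_dvd hm.1.1 h1)
  have hdvd1 : m ∣ orderOf (act (X := X) y) := by
    rw [hmp]
    apply Function.IsPeriodicPt.minimalPeriod_dvd
    have : ((act (X := X) y) ^ orderOf (act (X := X) y)) x = x := by
      rw [pow_orderOf_eq_one]; rfl
    rw [Equiv.Perm.coe_pow] at this; exact this
  have horder : orderOf (act (X := X) y) = orderOf (act x) := by
    have hsc : SemiconjBy f (act (X := X) y) (act (f y)) := by
      have := inn_conj_act hf y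
      unfold SemiconjBy
      rw [← this]; group
    rw [SemiconjBy.orderOf_eq f hsc, hfx]
  let g : Inn X := ⟨act x, hmem x⟩
  have hgstab : g ∈ MulAction.stabilizer (Inn X) x := by
    show g • x = x
    show act x x = x
    simp [op_self]
  have hdvd2 : orderOf (act (X := X) x) ∣ Nat.card (MulAction.stabilizer (Inn X) x) := by
    have heq : orderOf ((Inn X).subtype g) = orderOf g :=
      orderOf_injective (Inn X).subtype Subtype.coe_injective g
    rw [show act (X := X) x = (Inn X).subtype g from rfl, heq]
    exact Subgroup.orderOf_dvd_natCard _ hgstab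
  have hX : Nat.card X ≠ 0 := Nat.card_ne_zero.mpr ⟨⟨x⟩, inferInstance⟩
  have hcard : Nat.card (MulAction.stabilizer (Inn X) x) = Nat.card (Inn X) / Nat.card X := by
    have hidx := (MulAction.stabilizer (Inn X) x).index_mul_card
    have horb : (MulAction.orbit (Inn X) x) = Set.univ := by
      ext z
      simp only [Set.mem_univ, iff_true]
      obtain ⟨f', hf', hfz⟩ := hconn x z
      exact ⟨⟨f', hf'⟩, hfz⟩
    have hquot : (MulAction.stabilizer (Inn X) x).index = Nat.card X := by
      rw [Subgroup.index]
      rw [← Nat.card_congr (MulAction.orbitEquivQuotientStabilizer (Inn X) x)]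
      rw [horb]
      simp [Nat.card_congr (Equiv.Set.univ X)]
    rw [hquot] at hidx
    rw [← hidx, Nat.mul_div_cancel_left _ (Nat.pos_of_ne_zero hX)]
  rw [← hcard]
  exact hdvd1.trans (horder ▸ hdvd2)
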